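/- Assume (p₀), (V_α), (G_β). Then there exists a constant C > 1 such that, whenever U₁ ⊂ U₂ ⊂⊂ G satisfy d(U₁, U₂^c) ≥ C·(diam(U₁) ∨ 1), the killed Green function satisfies (c₂/2)·d(x,y)^{−ν} ≤ g_{U₂}(x,y) ≤ C₂·d(x,y)^{−ν} for all distinct x,y ∈ U₁, and (c₂/2) ≤ g_{U₂}(x,x) ≤ C₂ for all x ∈ U₁. -/

import Mathlib

open scoped ENNReal

open Classical in
noncomputable def nstep {V : Type*} (p : V → V → ℝ) : ℕ → V → V → ℝ
  | 0, x, y => if x = y then 1 else 0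
  | n + 1, x, y => ∑' z, nstep p n x z * p z y

noncomputable def green {V : Type*} (p : V → V → ℝ) (lam : V → ℝ) (x y : V) : ℝ :=
  (1 / lam y) * ∑' n, nstep p n x y

open Classical in
noncomputable def killedKernel {V : Type*} (p : V → V → ℝ) (U : Set V) (x y : V) : ℝ :=
  if x ∈ U ∧ y ∈ U then p x y else 0

noncomputable def killedGreen {V : Type*} (p : V → V → ℝ) (lam : V → ℝ) (U : Set V) (x y : V) : ℝ :=
  (1 / lam y) * ∑' n, nstep (killedKernel p U) n x y

open Classical in
noncomputable def hitProb {V : Type*} (p : V → V → ℝ) (A : Set V) (x : V) : ℝ :=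
  ∑' n : ℕ, ∑' y : V, if y ∈ A then nstep (fun a b => if a ∈ A then 0 else p a b) n x y else 0

open Classical in
noncomputable def eqMeasure {V : Type*} (p : V → V → ℝ) (lam : V → ℝ) (A : Set V) (x : V) : ℝ :=
  if x ∈ A then lam x * (1 - ∑' y, p x y * hitProb p A y) else 0

noncomputable def capaE {V : Type*} (p : V → V → ℝ) (lam : V → ℝ) (A : Set V) : ℝ≥0∞ :=
  ∑' x : V, Set.indicator A (fun v => ENNReal.ofReal (eqMeasure p lam A v)) x

open Classical in
noncomputable def enstep {V : Type*} (P : V → V → ℝ≥0∞) : ℕ → V → V → ℝ≥0∞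
  | 0, x, y => if x = y then 1 else 0
  | n + 1, x, y => ∑' z, enstep P n x z * P z y

section KGEAux

variable {V : Type*}

lemma nstep_nonneg (p : V → V → ℝ) (hnn : ∀ a b, 0 ≤ p a b) :
    ∀ (n : ℕ) (x y : V), 0 ≤ nstep p n x y
  | 0, x, y => by simp only [nstep]; split <;> norm_num
  | n + 1, x, y =>
      tsum_nonneg fun z => mul_nonneg (nstep_nonneg p hnn n x z) (hnn z y)

open Classical in
lemma enstep_zero' (P : V → V → ℝ≥0∞) (x y : V) :
    enstep P 0 x y = if x = y then 1 else 0 := rfl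

lemma enstep_succ' (P : V → V → ℝ≥0∞) (n : ℕ) (x y : V) :
    enstep P (n + 1) x y = ∑' z, enstep P n x z * P z y := rfl

lemma ofReal_nstep (p : V → V → ℝ) (s : V → Finset V) (hnn : ∀ a b, 0 ≤ p a b)
    (hs : ∀ z y, p z y ≠ 0 → z ∈ s y) :
    ∀ (n : ℕ) (x y : V), ENNReal.ofReal (nstep p n x y)
      = enstep (fun a b => ENNReal.ofReal (p a b)) n x y := by
  intro n
  induction n with
  | zero =>
      intro x y
      simp only [nstep, enstep]
      split <;> simp
  | succ n ih =>
      intro x y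
      have hz : ∀ z ∉ s y, nstep p n x z * p z y = 0 := by
        intro z hzs
        have hpz : p z y = 0 := by
          by_contra h; exact hzs (hs z y h)
        simp [hpz]
      have hz' : ∀ z ∉ s y,
          enstep (fun a b => ENNReal.ofReal (p a b)) n x z * ENNReal.ofReal (p z y) = 0 := by
        intro z hzs
        have hpz : p z y = 0 := by
          by_contra h; exact hzs (hs z y h)
        simp [hpz]
      rw [show nstep p (n+1) x y = ∑' z, nstep p n x z * p z y from rfl,
        tsum_eq_sum hz,
        ENNReal.ofReal_sum_of_nonneg
          (fun i _ => mul_nonneg (nstep_nonneg p hnn n x i) (hnn i y)),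
        enstep_succ', tsum_eq_sum hz']
      exact Finset.sum_congr rfl fun z _ => by
        rw [ENNReal.ofReal_mul (nstep_nonneg p hnn n x z), ih x z]

lemma enstep_mono {P Q : V → V → ℝ≥0∞} (hQP : ∀ a b, Q a b ≤ P a b) :
    ∀ (n : ℕ) (x y : V), enstep Q n x y ≤ enstep P n x y
  | 0, x, y => le_of_eq rfl
  | n + 1, x, y => by
      rw [enstep_succ', enstep_succ']
      exact ENNReal.tsum_le_tsum fun z =>
        mul_le_mul' (enstep_mono hQP n x z) (hQP z y)

lemma enstep_succ_sum (P : V → V → ℝ≥0∞) (n : ℕ) (x : V) :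
    ∑' y, enstep P (n + 1) x y = ∑' w, enstep P n x w * ∑' y, P w y := by
  simp only [enstep_succ']
  rw [ENNReal.tsum_comm]
  exact tsum_congr fun w => ENNReal.tsum_mul_left

lemma enstep_zero_of_target {Q : V → V → ℝ≥0∞} {U : Set V}
    (hQ : ∀ a b, b ∉ U → Q a b = 0) {x w : V} (hx : x ∈ U) (hw : w ∉ U) :
    ∀ k, enstep Q k x w = 0
  | 0 => by
      rw [enstep_zero', if_neg]
      intro h; exact hw (h ▸ hx)
  | k + 1 => by
      rw [enstep_succ']
      simp [hQ _ _ hw]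

/-- The inhomogeneous term in the perturbation expansion. -/
noncomputable def Cf (P Q : V → V → ℝ≥0∞) (k m : ℕ) (x y : V) : ℝ≥0∞ :=
  ∑' z, (∑' w, enstep Q k x w * (P w z - Q w z)) * enstep P m z y

lemma Cf_step (P Q : V → V → ℝ≥0∞) (k m : ℕ) (x y : V) :
    ∑' z, Cf P Q k m x z * P z y = Cf P Q k (m + 1) x y := by
  unfold Cf
  calc ∑' z, (∑' u, (∑' w, enstep Q k x w * (P w u - Q w u)) * enstep P m u z) * P z y
      = ∑' z, ∑' u, (∑' w, enstep Q k x w * (P w u - Q w u)) * enstep P m u z * P z y := by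
        exact tsum_congr fun z => (ENNReal.tsum_mul_right).symm ▸ rfl
    _ = ∑' u, ∑' z, (∑' w, enstep Q k x w * (P w u - Q w u)) * enstep P m u z * P z y :=
        ENNReal.tsum_comm
    _ = ∑' u, (∑' w, enstep Q k x w * (P w u - Q w u)) * ∑' z, enstep P m u z * P z y := by
        refine tsum_congr fun u => ?_
        simp_rw [mul_assoc]
        exact ENNReal.tsum_mul_left
    _ = ∑' u, (∑' w, enstep Q k x w * (P w u - Q w u)) * enstep P (m + 1) u y := by
        exact tsum_congr fun u => by rw [enstep_succ']

lemma enstep_decomp_aux (P Q : V → V → ℝ≥0∞) (hQP : ∀ a b, Q a b ≤ P a b) :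
    ∀ (n : ℕ) (x y : V), enstep P n x y
      = enstep Q n x y + ∑ k ∈ Finset.range n, Cf P Q k (n - 1 - k) x y := by
  intro n
  induction n with
  | zero => intro x y; simp [enstep_zero']
  | succ n ih =>
      intro x y
      have hPQR : ∀ a b, Q a b + (P a b - Q a b) = P a b := fun a b =>
        add_tsub_cancel_of_le (hQP a b)
      have step1 : enstep P (n + 1) x y
          = ∑' z, enstep Q n x z * P z y
            + ∑ k ∈ Finset.range n, ∑' z, Cf P Q k (n - 1 - k) x z * P z y := by
        rw [enstep_succ']
        calc ∑' z, enstep P n x z * P z y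
            = ∑' z, (enstep Q n x z * P z y
                + ∑ k ∈ Finset.range n, Cf P Q k (n - 1 - k) x z * P z y) := by
              refine tsum_congr fun z => ?_
              rw [ih x z, add_mul, Finset.sum_mul]
          _ = ∑' z, enstep Q n x z * P z y
              + ∑' z, ∑ k ∈ Finset.range n, Cf P Q k (n - 1 - k) x z * P z y :=
              ENNReal.tsum_add
          _ = _ := by
              rw [Summable.tsum_finsetSum fun i _ => ENNReal.summable]
      have step2 : ∑' z, enstep Q n x z * P z y
          = enstep Q (n + 1) x y + Cf P Q n 0 x y := by
        have hCf0 : Cf P Q n 0 x y = ∑' w, enstep Q n x w * (P w y - Q w y) := by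
          unfold Cf
          rw [tsum_eq_single y]
          · rw [enstep_zero', if_pos rfl, mul_one]
          · intro z hz
            rw [enstep_zero', if_neg hz, mul_zero]
        calc ∑' z, enstep Q n x z * P z y
            = ∑' z, (enstep Q n x z * Q z y + enstep Q n x z * (P z y - Q z y)) := by
              refine tsum_congr fun z => ?_
              rw [← mul_add, hPQR]
          _ = ∑' z, enstep Q n x z * Q z y + ∑' z, enstep Q n x z * (P z y - Q z y) :=
              ENNReal.tsum_add
          _ = enstep Q (n + 1) x y + Cf P Q n 0 x y := by
              rw [enstep_succ', hCf0]
      rw [step1, step2]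
      have step3 : ∑ k ∈ Finset.range n, ∑' z, Cf P Q k (n - 1 - k) x z * P z y
          = ∑ k ∈ Finset.range n, Cf P Q k (n - k) x y := by
        refine Finset.sum_congr rfl fun k hk => ?_
        rw [Cf_step]
        have : n - 1 - k + 1 = n - k := by
          have := Finset.mem_range.mp hk; omega
        rw [this]
      rw [step3]
      have step4 : ∑ k ∈ Finset.range (n + 1), Cf P Q k (n + 1 - 1 - k) x y
          = ∑ k ∈ Finset.range n, Cf P Q k (n - k) x y + Cf P Q n 0 x y := by
        rw [Finset.sum_range_succ]
        simp only [Nat.add_sub_cancel, Nat.sub_self]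
      rw [step4]
      ring

theorem enstep_green_decomp (P Q : V → V → ℝ≥0∞) (hQP : ∀ a b, Q a b ≤ P a b) (x y : V) :
    ∑' n, enstep P n x y = ∑' n, enstep Q n x y
      + ∑' u, (∑' k, ∑' w, enstep Q k x w * (P w u - Q w u)) * ∑' m, enstep P m u y := by
  have h1 : ∑' n, enstep P n x y
      = ∑' n, enstep Q n x y + ∑' n, ∑ k ∈ Finset.range n, Cf P Q k (n - 1 - k) x y := by
    rw [← ENNReal.tsum_add]
    exact tsum_congr fun n => enstep_decomp_aux P Q hQP n x y
  rw [h1]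
  congr 1
  classical
  have h2 : ∀ n : ℕ, ∑ k ∈ Finset.range n, Cf P Q k (n - 1 - k) x y
      = ∑' k, if k < n then Cf P Q k (n - 1 - k) x y else 0 := by
    intro n
    exact ((tsum_eq_sum (s := Finset.range n)
        (f := fun k => if k < n then Cf P Q k (n - 1 - k) x y else 0)
        (fun k hk => if_neg (by simpa using hk))).trans
      (Finset.sum_congr rfl fun k hk => if_pos (Finset.mem_range.mp hk))).symm
  calc ∑' n, ∑ k ∈ Finset.range n, Cf P Q k (n - 1 - k) x y
      = ∑' n, ∑' k, if k < n then Cf P Q k (n - 1 - k) x y else 0 := tsum_congr h2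
    _ = ∑' k, ∑' n, if k < n then Cf P Q k (n - 1 - k) x y else 0 := ENNReal.tsum_comm
    _ = ∑' k, ∑' m, Cf P Q k m x y := by
        refine tsum_congr fun k => ?_
        have hinj : Function.Injective (fun m : ℕ => k + 1 + m) := fun a b h => by
          simpa using h
        have hsupp : Function.support
            (fun n : ℕ => if k < n then Cf P Q k (n - 1 - k) x y else 0)
            ⊆ Set.range (fun m : ℕ => k + 1 + m) := by
          intro n hn
          have hkn : k < n := by
            by_contra h
            exact hn (if_neg h)
          exact ⟨n - k - 1, by change k + 1 + (n - k - 1) = n; omega⟩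
        rw [← hinj.tsum_eq hsupp]
        refine tsum_congr fun m => ?_
        have h1 : k < k + 1 + m := by omega
        have h2 : k + 1 + m - 1 - k = m := by omega
        simp only [h1, if_true, h2]
    _ = ∑' k, ∑' u, (∑' w, enstep Q k x w * (P w u - Q w u)) * ∑' m, enstep P m u y := by
        refine tsum_congr fun k => ?_
        unfold Cf
        rw [ENNReal.tsum_comm]
        exact tsum_congr fun u => ENNReal.tsum_mul_left
    _ = ∑' u, (∑' k, ∑' w, enstep Q k x w * (P w u - Q w u)) * ∑' m, enstep P m u y := by
        rw [ENNReal.tsum_comm]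
        exact tsum_congr fun u => ENNReal.tsum_mul_right

theorem enstep_exit_mass (P Q : V → V → ℝ≥0∞) (hQP : ∀ a b, Q a b ≤ P a b)
    (hrow : ∀ a, ∑' b, P a b = 1) (x : V) :
    ∑' u, ∑' k, ∑' w, enstep Q k x w * (P w u - Q w u) ≤ 1 := by
  have hre : ∑' u, ∑' k, ∑' w, enstep Q k x w * (P w u - Q w u)
      = ∑' k, ∑' w, enstep Q k x w * ∑' u, (P w u - Q w u) := by
    rw [ENNReal.tsum_comm]
    refine tsum_congr fun k => ?_
    rw [ENNReal.tsum_comm]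
    exact tsum_congr fun w => ENNReal.tsum_mul_left
  rw [hre]
  have hρσ : ∀ w, (∑' u, Q w u) + (∑' u, (P w u - Q w u)) = 1 := by
    intro w
    rw [← ENNReal.tsum_add, ← hrow w]
    exact tsum_congr fun u => add_tsub_cancel_of_le (hQP w u)
  have hS0 : ∑' w, enstep Q 0 x w = 1 := by
    classical
    rw [tsum_eq_single x (fun b hb => by
      rw [enstep_zero', if_neg (fun h => hb (h.symm))])]
    rw [enstep_zero', if_pos rfl]
  have hkey : ∀ k, (∑' w, enstep Q k x w * ∑' u, (P w u - Q w u))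
      + ∑' w, enstep Q (k + 1) x w = ∑' w, enstep Q k x w := by
    intro k
    rw [enstep_succ_sum, ← ENNReal.tsum_add]
    refine tsum_congr fun w => ?_
    rw [← mul_add, add_comm (∑' u, (P w u - Q w u)) (∑' u, Q w u), hρσ w, mul_one]
  have hpartial : ∀ N : ℕ,
      (∑ k ∈ Finset.range N, ∑' w, enstep Q k x w * ∑' u, (P w u - Q w u))
        + ∑' w, enstep Q N x w = 1 := by
    intro N
    induction N with
    | zero => simpa using hS0
    | succ N ihN =>
        rw [Finset.sum_range_succ, add_assoc, hkey N, ihN]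
  refine ENNReal.tsum_le_of_sum_range_le fun N => ?_
  calc ∑ k ∈ Finset.range N, ∑' w, enstep Q k x w * ∑' u, (P w u - Q w u)
      ≤ (∑ k ∈ Finset.range N, ∑' w, enstep Q k x w * ∑' u, (P w u - Q w u))
        + ∑' w, enstep Q N x w := le_self_add
    _ = 1 := hpartial N

end KGEAux


/-- killed Green function estimates: if U₁ ⊆ U₂ ⊂⊂ G are well separated
(d(U₁,U₂ᶜ) ≥ C·(diam U₁ ∨ 1)) then g_{U₂} is comparable to d^{-ν} on U₁. -/
theorem killed_green_estimates
    {V : Type*} (G : SimpleGraph V) [∀ v : V, Fintype (G.neighborSet v)] [Infinite V]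
    (hconn : G.Connected)
    (w : V → V → ℝ) (lam : V → ℝ) (p : V → V → ℝ) (d : V → V → ℝ)
    (hw_symm : ∀ x y, w x y = w y x)
    (hw_nonneg : ∀ x y, 0 ≤ w x y)
    (hw_adj : ∀ x y, 0 < w x y ↔ G.Adj x y)
    (hlam : ∀ x, lam x = ∑ y ∈ G.neighborFinset x, w x y)
    (hp : ∀ x y, p x y = w x y / lam x)
    (htrans : ∀ x y, Summable (fun n => nstep p n x y))
    (c₀ : ℝ) (hc₀ : 0 < c₀) (hp₀ : ∀ x y, G.Adj x y → c₀ ≤ p x y)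
    (hd_symm : ∀ x y, d x y = d y x)
    (hd_self : ∀ x, d x x = 0)
    (hd_nonneg : ∀ x y, 0 ≤ d x y)
    (hd_tri : ∀ x y z, d x z ≤ d x y + d y z)
    (hBfin : ∀ (x : V) (L : ℝ), {y | d x y ≤ L}.Finite)
    (α β : ℝ) (hα : 2 < α) (hβ₂ : 2 ≤ β) (hβα : β < α)
    (cV CV : ℝ) (hcV : 0 < cV)
    (hVol : ∀ (x : V) (L : ℝ), 1 ≤ L →
      cV * L ^ α ≤ ∑ y ∈ (hBfin x L).toFinset, lam y ∧
        ∑ y ∈ (hBfin x L).toFinset, lam y ≤ CV * L ^ α)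
    (cg Cg : ℝ) (hcg : 0 < cg)
    (hGdiag : ∀ x : V, cg ≤ green p lam x x ∧ green p lam x x ≤ Cg)
    (hGoff : ∀ x y : V, x ≠ y →
      cg * d x y ^ (-(α - β)) ≤ green p lam x y ∧
        green p lam x y ≤ Cg * d x y ^ (-(α - β))) :
    ∃ C : ℝ, 1 < C ∧ ∀ (U₁ U₂ : Set V), U₁ ⊆ U₂ → U₂.Finite →
      (∀ x ∈ U₁, ∀ y ∉ U₂, C * max (sSup (Set.image2 d U₁ U₁)) 1 ≤ d x y) →
      (∀ x ∈ U₁, ∀ y ∈ U₁, x ≠ y →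
          cg / 2 * d x y ^ (-(α - β)) ≤ killedGreen p lam U₂ x y ∧
            killedGreen p lam U₂ x y ≤ Cg * d x y ^ (-(α - β))) ∧
      (∀ x ∈ U₁, cg / 2 ≤ killedGreen p lam U₂ x x ∧ killedGreen p lam U₂ x x ≤ Cg) := by
  classical
  have hlampos : ∀ x : V, 0 < lam x := by
    intro x
    obtain ⟨y, hy⟩ := exists_ne x
    have hadj : ∃ z, G.Adj x z := by
      obtain ⟨wlk⟩ := hconn.preconnected x y
      cases wlk with
      | nil => exact absurd rfl hy
      | cons h _ => exact ⟨_, h⟩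
    obtain ⟨z, hz⟩ := hadj
    rw [hlam x]
    exact lt_of_lt_of_le ((hw_adj x z).mpr hz)
      (Finset.single_le_sum (fun i _ => hw_nonneg x i)
        ((SimpleGraph.mem_neighborFinset _ _ _).mpr hz))
  have hpnn : ∀ a b, 0 ≤ p a b := fun a b => by
    rw [hp]; exact div_nonneg (hw_nonneg a b) (hlampos a).le
  have hpzero : ∀ a b, ¬ G.Adj a b → p a b = 0 := by
    intro a b hab
    have h1 : w a b = 0 :=
      le_antisymm (not_lt.mp fun h => hab ((hw_adj a b).mp h)) (hw_nonneg a b)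
    rw [hp, h1, zero_div]
  have hsupp : ∀ z y : V, p z y ≠ 0 → z ∈ G.neighborFinset y := by
    intro z y h
    by_contra hzs
    exact h (hpzero z y fun hadj =>
      hzs ((SimpleGraph.mem_neighborFinset _ _ _).mpr hadj.symm))
  have hrow : ∀ a : V, ∑' b, ENNReal.ofReal (p a b) = 1 := by
    intro a
    have hsum : ∑ b ∈ G.neighborFinset a, p a b = 1 := by
      have h1 : ∑ b ∈ G.neighborFinset a, p a b
          = (∑ b ∈ G.neighborFinset a, w a b) / lam a := by
        rw [Finset.sum_div]
        exact Finset.sum_congr rfl fun b _ => hp a b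
      rw [h1, ← hlam a, div_self (hlampos a).ne']
    rw [tsum_eq_sum (s := G.neighborFinset a) (fun b hb => by
        rw [hpzero a b fun h => hb ((SimpleGraph.mem_neighborFinset _ _ _).mpr h),
          ENNReal.ofReal_zero]),
      ← ENNReal.ofReal_sum_of_nonneg (fun b _ => hpnn a b), hsum, ENNReal.ofReal_one]
  have hν : 0 < α - β := sub_pos.mpr hβα
  have hCg : 0 < Cg :=
    lt_of_lt_of_le hcg ((hGdiag (Classical.arbitrary V)).1.trans
      (hGdiag (Classical.arbitrary V)).2)
  set C : ℝ := (2 * Cg / cg) ^ (1 / (α - β)) + 2 with hCdef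
  have htnn : 0 ≤ (2 * Cg / cg) ^ (1 / (α - β)) := Real.rpow_nonneg (by positivity) _
  have hC1 : 1 < C := by rw [hCdef]; linarith
  have hCkey : Cg * C ^ (-(α - β)) ≤ cg / 2 := by
    have hbase : (0:ℝ) < 2 * Cg / cg := by positivity
    have hCpow : 2 * Cg / cg ≤ C ^ (α - β) := by
      have h1 : ((2 * Cg / cg) ^ (1 / (α - β))) ^ (α - β) = 2 * Cg / cg := by
        rw [← Real.rpow_mul hbase.le, one_div_mul_cancel hν.ne', Real.rpow_one]
      calc 2 * Cg / cg = ((2 * Cg / cg) ^ (1 / (α - β))) ^ (α - β) := h1.symm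
        _ ≤ C ^ (α - β) := Real.rpow_le_rpow htnn (by rw [hCdef]; linarith) hν.le
    have hApos : 0 < C ^ (α - β) := lt_of_lt_of_le hbase hCpow
    rw [Real.rpow_neg (by linarith : (0:ℝ) ≤ C), ← div_eq_mul_inv,
      div_le_div_iff₀ hApos two_pos]
    have h2 : 2 * Cg ≤ C ^ (α - β) * cg := (div_le_iff₀ hcg).mp hCpow
    linarith
  refine ⟨C, hC1, ?_⟩
  intro U₁ U₂ h12 hfin hsep
  set M : ℝ := max (sSup (Set.image2 d U₁ U₁)) 1 with hMdef
  have hM1 : (1:ℝ) ≤ M := le_max_right _ _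
  have hCM : (0:ℝ) < C * M := by nlinarith
  have hKnn : 0 ≤ Cg * (C * M) ^ (-(α - β)) :=
    mul_nonneg hCg.le (Real.rpow_nonneg hCM.le _)
  -- killed kernel facts
  have hqnn : ∀ a b, 0 ≤ killedKernel p U₂ a b := by
    intro a b; unfold killedKernel; split
    · exact hpnn a b
    · exact le_refl 0
  have hqlep : ∀ a b, killedKernel p U₂ a b ≤ p a b := by
    intro a b; unfold killedKernel; split
    · exact le_refl _
    · exact hpnn a b
  have hqzero : ∀ a b : V, b ∉ U₂ → killedKernel p U₂ a b = 0 := by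
    intro a b hb; unfold killedKernel
    rw [if_neg (fun h => hb h.2)]
  have hqeq : ∀ a b : V, a ∈ U₂ → b ∈ U₂ → killedKernel p U₂ a b = p a b := by
    intro a b ha hb; unfold killedKernel; rw [if_pos ⟨ha, hb⟩]
  have hqsupp : ∀ z y : V, killedKernel p U₂ z y ≠ 0 → z ∈ G.neighborFinset y := by
    intro z y h
    refine hsupp z y fun hpz => h ?_
    unfold killedKernel; split
    · exact hpz
    · rfl
  have heQP : ∀ a b : V, ENNReal.ofReal (killedKernel p U₂ a b) ≤ ENNReal.ofReal (p a b) :=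
    fun a b => ENNReal.ofReal_le_ofReal (hqlep a b)
  have hPn : ∀ (n : ℕ) (x y : V), ENNReal.ofReal (nstep p n x y)
      = enstep (fun a b => ENNReal.ofReal (p a b)) n x y :=
    ofReal_nstep p (fun y => G.neighborFinset y) hpnn hsupp
  have hQn : ∀ (n : ℕ) (x y : V), ENNReal.ofReal (nstep (killedKernel p U₂) n x y)
      = enstep (fun a b => ENNReal.ofReal (killedKernel p U₂ a b)) n x y :=
    ofReal_nstep (killedKernel p U₂) (fun y => G.neighborFinset y) hqnn hqsupp
  have hnqle : ∀ (n : ℕ) (x y : V), nstep (killedKernel p U₂) n x y ≤ nstep p n x y := by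
    intro n x y
    have h1 := enstep_mono (P := fun a b => ENNReal.ofReal (p a b))
      (Q := fun a b => ENNReal.ofReal (killedKernel p U₂ a b)) heQP n x y
    rw [← hPn, ← hQn] at h1
    exact (ENNReal.ofReal_le_ofReal_iff (nstep_nonneg p hpnn n x y)).mp h1
  have hqsummable : ∀ x y : V, Summable fun n => nstep (killedKernel p U₂) n x y :=
    fun x y => Summable.of_nonneg_of_le
      (fun n => nstep_nonneg _ hqnn n x y) (fun n => hnqle n x y) (htrans x y)
  have hSP : ∀ x y : V, ∑' n, enstep (fun a b => ENNReal.ofReal (p a b)) n x y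
      = ENNReal.ofReal (∑' n, nstep p n x y) := by
    intro x y
    rw [ENNReal.ofReal_tsum_of_nonneg (fun n => nstep_nonneg p hpnn n x y) (htrans x y)]
    exact tsum_congr fun n => (hPn n x y).symm
  have hSQ : ∀ x y : V,
      ∑' n, enstep (fun a b => ENNReal.ofReal (killedKernel p U₂ a b)) n x y
      = ENNReal.ofReal (∑' n, nstep (killedKernel p U₂) n x y) := by
    intro x y
    rw [ENNReal.ofReal_tsum_of_nonneg (fun n => nstep_nonneg _ hqnn n x y) (hqsummable x y)]
    exact tsum_congr fun n => (hQn n x y).symm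
  have hGsum : ∀ x y : V, ∑' n, nstep p n x y = lam y * green p lam x y := by
    intro x y; rw [green, ← mul_assoc, mul_one_div, div_self (hlampos y).ne', one_mul]
  have hid : ∀ x y : V, ∑' n, enstep (fun a b => ENNReal.ofReal (p a b)) n x y
      = ∑' n, enstep (fun a b => ENNReal.ofReal (killedKernel p U₂ a b)) n x y
        + ∑' u, (∑' k, ∑' w,
            enstep (fun a b => ENNReal.ofReal (killedKernel p U₂ a b)) k x w
              * (ENNReal.ofReal (p w u) - ENNReal.ofReal (killedKernel p U₂ w u)))
          * ∑' m, enstep (fun a b => ENNReal.ofReal (p a b)) m u y :=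
    fun x y => enstep_green_decomp _ _ heQP x y
  have hmass : ∀ x : V, ∑' u, (∑' k, ∑' w,
      enstep (fun a b => ENNReal.ofReal (killedKernel p U₂ a b)) k x w
        * (ENNReal.ofReal (p w u) - ENNReal.ofReal (killedKernel p U₂ w u))) ≤ 1 :=
    fun x => enstep_exit_mass _ _ heQP hrow x
  have hEE0 : ∀ x ∈ U₂, ∀ u ∈ U₂,
      (∑' k, ∑' w, enstep (fun a b => ENNReal.ofReal (killedKernel p U₂ a b)) k x w
        * (ENNReal.ofReal (p w u) - ENNReal.ofReal (killedKernel p U₂ w u))) = 0 := by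
    intro x hx u hu
    have hterm : ∀ (k : ℕ) (w : V),
        enstep (fun a b => ENNReal.ofReal (killedKernel p U₂ a b)) k x w
          * (ENNReal.ofReal (p w u) - ENNReal.ofReal (killedKernel p U₂ w u)) = 0 := by
      intro k w
      by_cases hw : w ∈ U₂
      · rw [hqeq w u hw hu, tsub_self, mul_zero]
      · rw [enstep_zero_of_target
          (fun a b hb => by rw [hqzero a b hb, ENNReal.ofReal_zero]) hx hw k, zero_mul]
    simp only [hterm, tsum_zero]
  have hcore : ∀ x ∈ U₁, ∀ y ∈ U₁,
      killedGreen p lam U₂ x y ≤ green p lam x y ∧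
        green p lam x y ≤ killedGreen p lam U₂ x y + Cg * (C * M) ^ (-(α - β)) := by
    intro x hx y hy
    have hxU₂ : x ∈ U₂ := h12 hx
    have hyU₂ : y ∈ U₂ := h12 hy
    have hextra : ∑' u, (∑' k, ∑' w,
        enstep (fun a b => ENNReal.ofReal (killedKernel p U₂ a b)) k x w
          * (ENNReal.ofReal (p w u) - ENNReal.ofReal (killedKernel p U₂ w u)))
        * ∑' m, enstep (fun a b => ENNReal.ofReal (p a b)) m u y
        ≤ ENNReal.ofReal (lam y * (Cg * (C * M) ^ (-(α - β)))) := by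
      have hub : ∀ u : V, (∑' k, ∑' w,
          enstep (fun a b => ENNReal.ofReal (killedKernel p U₂ a b)) k x w
            * (ENNReal.ofReal (p w u) - ENNReal.ofReal (killedKernel p U₂ w u)))
          * ∑' m, enstep (fun a b => ENNReal.ofReal (p a b)) m u y
          ≤ (∑' k, ∑' w,
          enstep (fun a b => ENNReal.ofReal (killedKernel p U₂ a b)) k x w
            * (ENNReal.ofReal (p w u) - ENNReal.ofReal (killedKernel p U₂ w u)))
          * ENNReal.ofReal (lam y * (Cg * (C * M) ^ (-(α - β)))) := by
        intro u
        by_cases hu : u ∈ U₂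
        · rw [hEE0 x hxU₂ u hu, zero_mul, zero_mul]
        · refine mul_le_mul_right ?_ _
          rw [hSP u y, hGsum u y]
          refine ENNReal.ofReal_le_ofReal (mul_le_mul_of_nonneg_left ?_ (hlampos y).le)
          have huy : u ≠ y := fun h => hu (h ▸ hyU₂)
          have hdd : C * M ≤ d u y := by rw [hd_symm u y]; exact hsep y hy u hu
          have h2 : d u y ^ (-(α - β)) ≤ (C * M) ^ (-(α - β)) :=
            Real.rpow_le_rpow_of_nonpos hCM hdd (by linarith)
          calc green p lam u y ≤ Cg * d u y ^ (-(α - β)) := (hGoff u y huy).2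
            _ ≤ Cg * (C * M) ^ (-(α - β)) := mul_le_mul_of_nonneg_left h2 hCg.le
      calc ∑' u, (∑' k, ∑' w,
          enstep (fun a b => ENNReal.ofReal (killedKernel p U₂ a b)) k x w
            * (ENNReal.ofReal (p w u) - ENNReal.ofReal (killedKernel p U₂ w u)))
          * ∑' m, enstep (fun a b => ENNReal.ofReal (p a b)) m u y
          ≤ ∑' u, (∑' k, ∑' w,
          enstep (fun a b => ENNReal.ofReal (killedKernel p U₂ a b)) k x w
            * (ENNReal.ofReal (p w u) - ENNReal.ofReal (killedKernel p U₂ w u)))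
          * ENNReal.ofReal (lam y * (Cg * (C * M) ^ (-(α - β)))) :=
            ENNReal.tsum_le_tsum hub
        _ = (∑' u, ∑' k, ∑' w,
          enstep (fun a b => ENNReal.ofReal (killedKernel p U₂ a b)) k x w
            * (ENNReal.ofReal (p w u) - ENNReal.ofReal (killedKernel p U₂ w u)))
          * ENNReal.ofReal (lam y * (Cg * (C * M) ^ (-(α - β)))) := ENNReal.tsum_mul_right
        _ ≤ 1 * ENNReal.ofReal (lam y * (Cg * (C * M) ^ (-(α - β)))) :=
            mul_le_mul_left (hmass x) _
        _ = ENNReal.ofReal (lam y * (Cg * (C * M) ^ (-(α - β)))) := one_mul _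
    constructor
    · have h1 : ENNReal.ofReal (∑' n, nstep (killedKernel p U₂) n x y)
          ≤ ENNReal.ofReal (∑' n, nstep p n x y) := by
        rw [← hSP x y, ← hSQ x y, hid x y]
        exact le_self_add
      have h2 := (ENNReal.ofReal_le_ofReal_iff
        (tsum_nonneg fun n => nstep_nonneg p hpnn n x y)).mp h1
      rw [green, killedGreen]
      exact mul_le_mul_of_nonneg_left h2 (one_div_nonneg.mpr (hlampos y).le)
    · have h3 : ENNReal.ofReal (∑' n, nstep p n x y)
          ≤ ENNReal.ofReal ((∑' n, nstep (killedKernel p U₂) n x y)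
            + lam y * (Cg * (C * M) ^ (-(α - β)))) := by
        rw [ENNReal.ofReal_add (tsum_nonneg fun n => nstep_nonneg _ hqnn n x y)
          (mul_nonneg (hlampos y).le hKnn), ← hSQ x y, ← hSP x y, hid x y]
        exact add_le_add_right hextra _
      have h4 := (ENNReal.ofReal_le_ofReal_iff
        (add_nonneg (tsum_nonneg fun n => nstep_nonneg _ hqnn n x y)
          (mul_nonneg (hlampos y).le hKnn))).mp h3
      rw [green, killedGreen]
      calc (1 / lam y) * ∑' n, nstep p n x y
          ≤ (1 / lam y) * ((∑' n, nstep (killedKernel p U₂) n x y)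
            + lam y * (Cg * (C * M) ^ (-(α - β)))) :=
            mul_le_mul_of_nonneg_left h4 (one_div_nonneg.mpr (hlampos y).le)
        _ = (1 / lam y) * (∑' n, nstep (killedKernel p U₂) n x y)
            + Cg * (C * M) ^ (-(α - β)) := by
            rw [mul_add, one_div, inv_mul_cancel_left₀ (hlampos y).ne']
  have hbdd : BddAbove (Set.image2 d U₁ U₁) :=
    (Set.Finite.image2 d (hfin.subset h12) (hfin.subset h12)).bddAbove
  have hdM : ∀ x ∈ U₁, ∀ y ∈ U₁, d x y ≤ M := fun x hx y hy =>
    le_trans (le_csSup hbdd (Set.mem_image2_of_mem hx hy)) (le_max_left _ _)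
  have hMν : Cg * (C * M) ^ (-(α - β)) ≤ cg / 2 * M ^ (-(α - β)) := by
    rw [Real.mul_rpow (by linarith : (0:ℝ) ≤ C) (by linarith : (0:ℝ) ≤ M)]
    calc Cg * (C ^ (-(α - β)) * M ^ (-(α - β)))
        = (Cg * C ^ (-(α - β))) * M ^ (-(α - β)) := by ring
      _ ≤ (cg / 2) * M ^ (-(α - β)) :=
          mul_le_mul_of_nonneg_right hCkey (Real.rpow_nonneg (by linarith) _)
  refine ⟨?_, ?_⟩
  · intro x hx y hy hxy
    refine ⟨?_, (hcore x hx y hy).1.trans (hGoff x y hxy).2⟩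
    rcases (hd_nonneg x y).eq_or_lt with hd0 | hdpos
    · rw [← hd0, Real.zero_rpow (neg_ne_zero.mpr hν.ne'), mul_zero, killedGreen]
      exact mul_nonneg (one_div_nonneg.mpr (hlampos y).le)
        (tsum_nonneg fun n => nstep_nonneg _ hqnn n x y)
    · have h6 : M ^ (-(α - β)) ≤ d x y ^ (-(α - β)) :=
        Real.rpow_le_rpow_of_nonpos hdpos (hdM x hx y hy) (by linarith)
      have h7 : Cg * (C * M) ^ (-(α - β)) ≤ cg / 2 * d x y ^ (-(α - β)) :=
        hMν.trans (mul_le_mul_of_nonneg_left h6 (by linarith))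
      have h8 := (hcore x hx y hy).2
      have h9 := (hGoff x y hxy).1
      linarith
  · intro x hx
    refine ⟨?_, (hcore x hx x hx).1.trans (hGdiag x).2⟩
    have h6 : M ^ (-(α - β)) ≤ 1 := Real.rpow_le_one_of_one_le_of_nonpos hM1 (by linarith)
    have h7 : Cg * (C * M) ^ (-(α - β)) ≤ cg / 2 :=
      hMν.trans (mul_le_of_le_one_right (by linarith) h6)
    have h8 := (hcore x hx x hx).2
    have h9 := (hGdiag x).1
    linarith
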